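/- In a cons-free ATRS, for any basic starting term f s₁ ... s_n, any term t reachable by rewriting is B-safe where B = B_{f s⃗} is the set of data terms that are subterms of the starting term or of a right-hand side of a rule; in particular, every data term occurring (as a subterm) in such a reduction lies in B. -/

import Mathlib

/-! # Applicative term rewriting systems (ATRSs) -/

/-- Simple types over a countable set of sorts. -/
inductive Ty where
  | base : ℕ → Ty
  | arrow : Ty → Ty → Ty

/-- Type order: sorts have order 0, `σ ⇒ τ` has order `max (order σ + 1) (order τ)`. -/
def Ty.order : Ty → ℕ
  | .base _ => 0
  | .arrow σ τ => max (σ.order + 1) τ.order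

/-- Applicative terms over a set `α` of function symbols, with variables `ℕ`. -/
inductive Tm (α : Type) where
  | sym : α → Tm α
  | var : ℕ → Tm α
  | app : Tm α → Tm α → Tm α

mutual
  /-- Strict subterm: `t` is a strict subterm of `s₁ s₂` if it is a strict
  subterm of `s₁` or a subterm of `s₂` (heads of applications are not subterms). -/
  inductive StrSubtm {α : Type} : Tm α → Tm α → Prop where
    | left {t s u : Tm α} : StrSubtm t s → StrSubtm t (Tm.app s u)
    | right {t s u : Tm α} : Subtm t u → StrSubtm t (Tm.app s u)
  /-- Subterm: `t ⊴ s` iff `t = s` or `t` is a strict subterm of `s`. -/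
  inductive Subtm {α : Type} : Tm α → Tm α → Prop where
    | refl (s : Tm α) : Subtm s s
    | strict {t s : Tm α} : StrSubtm t s → Subtm t s
end

/-- A signature: which symbols are constructors, their types, and variable types. -/
structure Sig (α : Type) where
  Cons : α → Prop
  typeOf : α → Ty
  varTy : ℕ → Ty

/-- Typing judgement for applicative terms. -/
inductive HasTy {α : Type} (S : Sig α) : Tm α → Ty → Prop where
  | sym (f : α) : HasTy S (.sym f) (S.typeOf f)
  | var (x : ℕ) : HasTy S (.var x) (S.varTy x)
  | app {s t : Tm α} {σ τ : Ty} :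
      HasTy S s (.arrow σ τ) → HasTy S t σ → HasTy S (.app s t) τ

mutual
  /-- Patterns: a variable, or a constructor fully applied (to base type) to patterns. -/
  inductive Pat {α : Type} (S : Sig α) : Tm α → Prop where
    | var (x : ℕ) : Pat S (.var x)
    | cons {s : Tm α} : PatSpine S s → (∃ i, HasTy S s (.base i)) → Pat S s
  /-- A constructor applied to a (possibly incomplete) list of patterns. -/
  inductive PatSpine {α : Type} (S : Sig α) : Tm α → Prop where
    | head {f : α} : S.Cons f → PatSpine S (.sym f)
    | app {s t : Tm α} : PatSpine S s → Pat S t → PatSpine S (.app s t)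
end

/-- Ground terms: terms without variables. -/
def Tm.ground {α : Type} : Tm α → Prop
  | .sym _ => True
  | .var _ => False
  | .app s t => s.ground ∧ t.ground

/-- Data terms: ground patterns. -/
def IsData {α : Type} (S : Sig α) (s : Tm α) : Prop := Pat S s ∧ s.ground

/-- The set of variables of a term. -/
def Tm.vars {α : Type} : Tm α → Set ℕ
  | .sym _ => ∅
  | .var x => {x}
  | .app s t => s.vars ∪ t.vars

/-- Number of occurrences of variable `x` in a term. -/
def Tm.count {α : Type} (x : ℕ) : Tm α → ℕ
  | .sym _ => 0
  | .var y => if y = x then 1 else 0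
  | .app s t => Tm.count x s + Tm.count x t

/-- Applying a substitution to a term. -/
def subst {α : Type} (γ : ℕ → Tm α) : Tm α → Tm α
  | .sym f => .sym f
  | .var x => γ x
  | .app s t => .app (subst γ s) (subst γ t)

/-- A rewrite rule. -/
structure Rule (α : Type) where
  lhs : Tm α
  rhs : Tm α

/-- Left-hand side shape of a constructor rule:
a defined symbol applied to patterns. -/
inductive LhsSpine {α : Type} (S : Sig α) : Tm α → Prop where
  | head {f : α} : ¬ S.Cons f → LhsSpine S (.sym f)
  | app {s t : Tm α} : LhsSpine S s → Pat S t → LhsSpine S (.app s t)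

/-- The head symbol of a term, if any. -/
def Tm.headSym {α : Type} : Tm α → Option α
  | .sym f => some f
  | .var _ => none
  | .app s _ => s.headSym

/-- `t` has the form `c t₁ ⋯ t_m` with `c` a constructor. -/
def ConsHead {α : Type} (S : Sig α) (t : Tm α) : Prop :=
  ∃ f, t.headSym = some f ∧ S.Cons f

/-- A rule is cons-free if every constructor-headed subterm of the right-hand side
is a data term or a (strict) subterm of the left-hand side. -/
def ConsFreeRule {α : Type} (S : Sig α) (ρ : Rule α) : Prop :=
  ∀ t, Subtm t ρ.rhs → ConsHead S t → (IsData S t ∨ StrSubtm t ρ.lhs)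

/-- A left-linear cons-free constructor rule (with well-typed sides of equal type,
and variables of the right-hand side occurring on the left). -/
def GoodRule {α : Type} (S : Sig α) (ρ : Rule α) : Prop :=
  LhsSpine S ρ.lhs ∧
  (∀ x, Tm.count x ρ.lhs ≤ 1) ∧
  ρ.rhs.vars ⊆ ρ.lhs.vars ∧
  (∃ σ, HasTy S ρ.lhs σ ∧ HasTy S ρ.rhs σ) ∧
  ConsFreeRule S ρ

/-- One-step rewriting: closure of rule instances under application contexts. -/
inductive Rew {α : Type} (R : Set (Rule α)) : Tm α → Tm α → Prop where
  | root {ρ : Rule α} {γ : ℕ → Tm α} :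
      ρ ∈ R → Rew R (subst γ ρ.lhs) (subst γ ρ.rhs)
  | appL {s s' t : Tm α} : Rew R s s' → Rew R (.app s t) (.app s' t)
  | appR {s t t' : Tm α} : Rew R t t' → Rew R (.app s t) (.app s t')

/-- `s` is `B`-safe: every constructor-headed subterm of `s` lies in `B`. -/
def BSafe {α : Type} (S : Sig α) (B : Set (Tm α)) (s : Tm α) : Prop :=
  ∀ t, Subtm t s → ConsHead S t → t ∈ B

/-- `B` is a suitable set of data terms: it consists of data terms, is closed
under subterms, and contains all data subterms of right-hand sides of rules. -/
def GoodB {α : Type} (S : Sig α) (R : Set (Rule α)) (B : Set (Tm α)) : Prop :=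
  (∀ t ∈ B, IsData S t) ∧
  (∀ t ∈ B, ∀ u, Subtm u t → u ∈ B) ∧
  (∀ ρ ∈ R, ∀ t, Subtm t ρ.rhs → IsData S t → t ∈ B)

/-- Spine of a basic term: a defined symbol applied to data terms. -/
inductive BasicSpine {α : Type} (S : Sig α) : Tm α → Prop where
  | head {f : α} : ¬ S.Cons f → BasicSpine S (.sym f)
  | app {s t : Tm α} : BasicSpine S s → IsData S t → BasicSpine S (.app s t)

/-- Basic terms: a defined symbol applied to data terms, of base type. -/
def Basic {α : Type} (S : Sig α) (s : Tm α) : Prop :=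
  BasicSpine S s ∧ ∃ i, HasTy S s (.base i)

/-- The set `B_s`: data terms occurring in `s` or in a right-hand side of a rule. -/
def Bset {α : Type} (S : Sig α) (R : Set (Rule α)) (s : Tm α) : Set (Tm α) :=
  { t | IsData S t ∧ (Subtm t s ∨ ∃ ρ ∈ R, Subtm t ρ.rhs) }

section Aux
variable {α : Type}

/-! ### Subterm basics -/

theorem strSubtm_trans : ∀ (c b a : Tm α), StrSubtm b c → Subtm a b → StrSubtm a c := by
  intro c
  induction c with
  | sym f => intro b a h _; cases h
  | var x => intro b a h _; cases h
  | app c1 c2 ih1 ih2 =>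
    intro b a h ha
    cases h with
    | left h => exact .left (ih1 _ _ h ha)
    | right h =>
      cases h with
      | refl => exact .right ha
      | strict h' => exact .right (.strict (ih2 _ _ h' ha))

theorem subtm_trans {c b a : Tm α} (h : Subtm b c) (h' : Subtm a b) : Subtm a c := by
  cases h with
  | refl => exact h'
  | strict h => exact .strict (strSubtm_trans _ _ _ h h')

/-! ### Head symbols -/

theorem patspine_head {S : Sig α} : ∀ (s : Tm α), PatSpine S s →
    ∃ c, s.headSym = some c ∧ S.Cons c := by
  intro s
  induction s with
  | sym f => intro h; cases h with | head hc => exact ⟨f, rfl, hc⟩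
  | var x => intro h; cases h
  | app a b iha _ => intro h; cases h with | app hs _ => exact iha hs

theorem basicspine_head {S : Sig α} : ∀ (s : Tm α), BasicSpine S s →
    ∃ f, s.headSym = some f ∧ ¬ S.Cons f := by
  intro s
  induction s with
  | sym f => intro h; cases h with | head hc => exact ⟨f, rfl, hc⟩
  | var x => intro h; cases h
  | app a b iha _ => intro h; cases h with | app hs _ => exact iha hs

theorem lhsspine_subst_head {S : Sig α} (γ : ℕ → Tm α) : ∀ (l : Tm α), LhsSpine S l →
    ∃ f, (subst γ l).headSym = some f ∧ ¬ S.Cons f := by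
  intro l
  induction l with
  | sym f => intro h; cases h with | head hc => exact ⟨f, rfl, hc⟩
  | var x => intro h; cases h
  | app a b iha _ => intro h; cases h with | app hs _ => exact iha hs

/-! ### Data / patterns basics -/

theorem isdata_spine {S : Sig α} {t : Tm α} (h : IsData S t) : PatSpine S t := by
  obtain ⟨hp, hg⟩ := h
  cases hp with
  | var x => exact hg.elim
  | cons hs _ => exact hs

theorem isdata_base {S : Sig α} {t : Tm α} (h : IsData S t) : ∃ i, HasTy S t (.base i) := by
  obtain ⟨hp, hg⟩ := h
  cases hp with
  | var x => exact hg.elim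
  | cons _ hb => exact hb

theorem isdata_conshead {S : Sig α} {t : Tm α} (h : IsData S t) : ConsHead S t := by
  obtain ⟨c, h1, h2⟩ := patspine_head t (isdata_spine h)
  exact ⟨c, h1, h2⟩

theorem ground_subst (γ : ℕ → Tm α) : ∀ (t : Tm α), t.ground → subst γ t = t := by
  intro t
  induction t with
  | sym f => intro _; rfl
  | var x => intro h; exact h.elim
  | app a b iha ihb => intro h; simp [subst, iha h.1, ihb h.2]

theorem patspine_str_data {S : Sig α} : ∀ (t : Tm α), PatSpine S t → t.ground →
    ∀ u, StrSubtm u t → IsData S u := by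
  intro t
  induction t with
  | sym f => intro _ _ u hu; cases hu
  | var x => intro h; cases h
  | app a b iha ihb =>
    intro h hg u hu
    cases h with | app hsa hpb =>
    cases hu with
    | left h' => exact iha hsa hg.1 u h'
    | right h' =>
      cases h' with
      | refl => exact ⟨hpb, hg.2⟩
      | strict h'' => exact ihb (isdata_spine ⟨hpb, hg.2⟩) hg.2 u h''

theorem isdata_subtm {S : Sig α} {t u : Tm α} (h : IsData S t) (hu : Subtm u t) : IsData S u := by
  cases hu with
  | refl => exact h
  | strict h' => exact patspine_str_data t (isdata_spine h) h.2 u h'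

theorem basicspine_str_data {S : Sig α} : ∀ (s : Tm α), BasicSpine S s →
    ∀ u, StrSubtm u s → IsData S u := by
  intro s
  induction s with
  | sym f => intro _ u hu; cases hu
  | var x => intro h; cases h
  | app a b iha _ =>
    intro h u hu
    cases h with | app hsa hdb =>
    cases hu with
    | left h' => exact iha hsa u h'
    | right h' => exact isdata_subtm hdb h'

/-! ### No step from data -/

theorem nostep_patspine {S : Sig α} {R : Set (Rule α)} (hR : ∀ ρ ∈ R, GoodRule S ρ) :
    ∀ {t t' : Tm α}, Rew R t t' → PatSpine S t → t.ground → False := by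
  intro t t' h
  induction h with
  | @root ρ γ hρ =>
    intro hp hg
    obtain ⟨c, hc1, hc2⟩ := patspine_head _ hp
    obtain ⟨f, hf1, hf2⟩ := lhsspine_subst_head γ _ (hR ρ hρ).1
    rw [hc1] at hf1
    injection hf1 with h'
    exact hf2 (h' ▸ hc2)
  | appL h ih =>
    intro hp hg
    cases hp with | app hs _ => exact ih hs hg.1
  | appR h ih =>
    intro hp hg
    cases hp with
    | app _ hpt => exact ih (isdata_spine ⟨hpt, hg.2⟩) hg.2

/-! ### Substitution and subterms -/

theorem str_subst_mono (γ : ℕ → Tm α) : ∀ (w u : Tm α), StrSubtm u w →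
    StrSubtm (subst γ u) (subst γ w) := by
  intro w
  induction w with
  | sym f => intro u h; cases h
  | var x => intro u h; cases h
  | app a b iha ihb =>
    intro u h
    cases h with
    | left h' => exact .left (iha u h')
    | right h' =>
      cases h' with
      | refl => exact .right (.refl _)
      | strict h'' => exact .right (.strict (ihb u h''))

theorem subtm_subst_mono (γ : ℕ → Tm α) {w u : Tm α} (h : Subtm u w) :
    Subtm (subst γ u) (subst γ w) := by
  cases h with
  | refl => exact .refl _
  | strict h' => exact .strict (str_subst_mono γ _ _ h')

theorem str_vars : ∀ (w v : Tm α), StrSubtm v w → v.vars ⊆ w.vars := by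
  intro w
  induction w with
  | sym f => intro v h; cases h
  | var x => intro v h; cases h
  | app a b iha ihb =>
    intro v h
    cases h with
    | left h' => exact (iha v h').trans (Set.subset_union_left)
    | right h' =>
      cases h' with
      | refl => exact Set.subset_union_right
      | strict h'' => exact (ihb v h'').trans (Set.subset_union_right)

theorem subtm_vars {w v : Tm α} (h : Subtm v w) : v.vars ⊆ w.vars := by
  cases h with
  | refl => exact le_refl _
  | strict h' => exact str_vars _ _ h'

theorem str_subst_decomp (γ : ℕ → Tm α) : ∀ (r : Tm α), ∀ u, StrSubtm u (subst γ r) →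
    (∃ v, StrSubtm v r ∧ u = subst γ v) ∨ (∃ x, x ∈ r.vars ∧ Subtm u (γ x)) := by
  intro r
  induction r with
  | sym f => intro u h; cases h
  | var x => intro u h; exact .inr ⟨x, rfl, .strict h⟩
  | app r1 r2 ih1 ih2 =>
    intro u h
    cases h with
    | left h' =>
      rcases ih1 u h' with ⟨v, hv, he⟩ | ⟨x, hx, hu⟩
      · exact .inl ⟨v, .left hv, he⟩
      · exact .inr ⟨x, Set.mem_union_left _ hx, hu⟩
    | right h' =>
      cases h' with
      | refl => exact .inl ⟨r2, .right (.refl _), rfl⟩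
      | strict h'' =>
        rcases ih2 u h'' with ⟨v, hv, he⟩ | ⟨x, hx, hu⟩
        · exact .inl ⟨v, .right (.strict hv), he⟩
        · exact .inr ⟨x, Set.mem_union_right _ hx, hu⟩

theorem subtm_subst_decomp (γ : ℕ → Tm α) (r : Tm α) {u : Tm α} (h : Subtm u (subst γ r)) :
    (∃ v, Subtm v r ∧ u = subst γ v) ∨ (∃ x, x ∈ r.vars ∧ Subtm u (γ x)) := by
  cases h with
  | refl => exact .inl ⟨r, .refl _, rfl⟩
  | strict h' =>
    rcases str_subst_decomp γ r _ h' with ⟨v, hv, he⟩ | h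
    · exact .inl ⟨v, .strict hv, he⟩
    · exact .inr h

/-! ### Variable positions in patterns and lhs spines -/

theorem pat_var_pos {S : Sig α} (γ : ℕ → Tm α) : ∀ (p : Tm α),
    (PatSpine S p → ∀ x ∈ p.vars, StrSubtm (γ x) (subst γ p)) ∧
    (Pat S p → ∀ x ∈ p.vars, Subtm (γ x) (subst γ p)) := by
  intro p
  induction p with
  | sym f =>
    exact ⟨fun _ x hx => hx.elim, fun _ x hx => hx.elim⟩
  | var y =>
    constructor
    · intro h; cases h
    · intro _ x hx
      have : x = y := hx
      subst this
      exact .refl _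
  | app a b iha ihb =>
    have hspine : PatSpine S (.app a b) → ∀ x ∈ (Tm.app a b).vars,
        StrSubtm (γ x) (subst γ (.app a b)) := by
      intro h x hx
      cases h with | app hsa hpb =>
      rcases hx with hx | hx
      · exact .left (iha.1 hsa x hx)
      · exact .right (ihb.2 hpb x hx)
    refine ⟨hspine, ?_⟩
    intro h x hx
    cases h with
    | cons hs _ => exact .strict (hspine hs x hx)

theorem lhs_var_pos {S : Sig α} (γ : ℕ → Tm α) : ∀ (l : Tm α), LhsSpine S l →
    ∀ x ∈ l.vars, StrSubtm (γ x) (subst γ l) := by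
  intro l
  induction l with
  | sym f => intro _ x hx; exact hx.elim
  | var y => intro h; cases h
  | app a b iha _ =>
    intro h x hx
    cases h with | app hsa hpb =>
    rcases hx with hx | hx
    · exact .left (iha hsa x hx)
    · exact .right ((pat_var_pos γ b).2 hpb x hx)

/-! ### Head variable analysis -/

def headVarCF : Tm α → Option ℕ
  | .sym _ => none
  | .var x => some x
  | .app s _ => headVarCF s

theorem head_cases (γ : ℕ → Tm α) : ∀ (v : Tm α),
    (∃ f, v.headSym = some f ∧ (subst γ v).headSym = some f) ∨
    (∃ x, headVarCF v = some x ∧ x ∈ v.vars ∧ (subst γ v).headSym = (γ x).headSym) := by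
  intro v
  induction v with
  | sym f => exact .inl ⟨f, rfl, rfl⟩
  | var x => exact .inr ⟨x, rfl, rfl, rfl⟩
  | app a b iha _ =>
    rcases iha with ⟨f, h1, h2⟩ | ⟨x, h1, h2, h3⟩
    · exact .inl ⟨f, h1, h2⟩
    · exact .inr ⟨x, h1, Set.mem_union_left _ h2, h3⟩

theorem headvar_arrow {S : Sig α} (γ : ℕ → Tm α) : ∀ (v : Tm α) (x : ℕ),
    headVarCF v = some x → v ≠ .var x → ∀ σ, HasTy S (subst γ v) σ →
    ∃ a b, HasTy S (γ x) (.arrow a b) := by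
  intro v
  induction v with
  | sym f => intro x h; exact absurd h (by simp [headVarCF])
  | var y =>
    intro x h hne
    injection h with h
    exact absurd (by rw [h]) hne
  | app v1 v2 ih1 _ =>
    intro x h hne σ hty
    cases hty with
    | app h1 h2 =>
      by_cases hv : v1 = .var x
      · subst hv; exact ⟨_, _, h1⟩
      · exact ih1 x h hv _ h1

/-! ### Typing lemmas -/

theorem hasty_unique {S : Sig α} : ∀ (t : Tm α) (σ τ : Ty),
    HasTy S t σ → HasTy S t τ → σ = τ := by
  intro t
  induction t with
  | sym f => intro σ τ h1 h2; cases h1; cases h2; rfl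
  | var x => intro σ τ h1 h2; cases h1; cases h2; rfl
  | app a b iha _ =>
    intro σ τ h1 h2
    cases h1 with | app ha1 hb1 =>
    cases h2 with | app ha2 hb2 =>
    exact (Ty.arrow.inj (iha _ _ ha1 ha2)).2

theorem str_hasty {S : Sig α} : ∀ (t : Tm α) (σ : Ty), HasTy S t σ →
    ∀ u, StrSubtm u t → ∃ τ, HasTy S u τ := by
  intro t
  induction t with
  | sym f => intro σ _ u h; cases h
  | var x => intro σ _ u h; cases h
  | app a b iha ihb =>
    intro σ h u hu
    cases h with | app ha hb =>
    cases hu with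
    | left h' => exact iha _ ha u h'
    | right h' =>
      cases h' with
      | refl => exact ⟨_, hb⟩
      | strict h'' => exact ihb _ hb u h''

theorem subtm_hasty {S : Sig α} {t : Tm α} {σ : Ty} (h : HasTy S t σ)
    {u : Tm α} (hu : Subtm u t) : ∃ τ, HasTy S u τ := by
  cases hu with
  | refl => exact ⟨σ, h⟩
  | strict h' => exact str_hasty t σ h u h'

theorem subst_hasty {S : Sig α} {γ : ℕ → Tm α} : ∀ {t : Tm α} {σ : Ty}, HasTy S t σ →
    (∀ x ∈ t.vars, HasTy S (γ x) (S.varTy x)) → HasTy S (subst γ t) σ := by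
  intro t σ h
  induction h with
  | sym f => intro _; exact .sym f
  | var x => intro hv; exact hv x rfl
  | app h1 h2 ih1 ih2 =>
    intro hv
    exact .app (ih1 fun x hx => hv x (Set.mem_union_left _ hx))
      (ih2 fun x hx => hv x (Set.mem_union_right _ hx))

theorem pat_ty_decomp {S : Sig α} (γ : ℕ → Tm α) : ∀ (p : Tm α),
    (PatSpine S p → ∀ σ τ, HasTy S p σ → HasTy S (subst γ p) τ →
      σ = τ ∧ ∀ x ∈ p.vars, HasTy S (γ x) (S.varTy x)) ∧
    (Pat S p → ∀ σ, HasTy S p σ → HasTy S (subst γ p) σ →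
      ∀ x ∈ p.vars, HasTy S (γ x) (S.varTy x)) := by
  intro p
  induction p with
  | sym f =>
    constructor
    · intro _ σ τ h1 h2
      cases h1; cases h2
      exact ⟨rfl, fun x hx => hx.elim⟩
    · intro _ σ _ _ x hx; exact hx.elim
  | var y =>
    constructor
    · intro h; cases h
    · intro _ σ h1 h2 x hx
      have : x = y := hx
      subst this
      cases h1
      exact h2
  | app a b iha ihb =>
    have hspine : PatSpine S (.app a b) → ∀ σ τ, HasTy S (.app a b) σ →
        HasTy S (subst γ (.app a b)) τ →
        σ = τ ∧ ∀ x ∈ (Tm.app a b).vars, HasTy S (γ x) (S.varTy x) := by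
      intro h σ τ h1 h2
      cases h with | app hsa hpb =>
      cases h1 with | app ha hb =>
      cases h2 with | app ha' hb' =>
      obtain ⟨heq, hva⟩ := iha.1 hsa _ _ ha ha'
      injection heq with hμ hστ
      subst hμ
      refine ⟨hστ, ?_⟩
      intro x hx
      rcases hx with hx | hx
      · exact hva x hx
      · exact ihb.2 hpb _ hb hb' x hx
    refine ⟨hspine, ?_⟩
    intro h σ h1 h2 x hx
    cases h with
    | cons hs _ => exact (hspine hs σ σ h1 h2).2 x hx

theorem lhs_ty_decomp {S : Sig α} (γ : ℕ → Tm α) : ∀ (l : Tm α), LhsSpine S l →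
    ∀ σ τ, HasTy S l σ → HasTy S (subst γ l) τ →
    σ = τ ∧ ∀ x ∈ l.vars, HasTy S (γ x) (S.varTy x) := by
  intro l
  induction l with
  | sym f =>
    intro _ σ τ h1 h2
    cases h1; cases h2
    exact ⟨rfl, fun x hx => hx.elim⟩
  | var y => intro h; cases h
  | app a b iha _ =>
    intro h σ τ h1 h2
    cases h with | app hsa hpb =>
    cases h1 with | app ha hb =>
    cases h2 with | app ha' hb' =>
    obtain ⟨heq, hva⟩ := iha hsa _ _ ha ha'
    injection heq with hμ hστ
    subst hμ
    refine ⟨hστ, ?_⟩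
    intro x hx
    rcases hx with hx | hx
    · exact hva x hx
    · exact (pat_ty_decomp γ b).2 hpb _ hb hb' x hx

/-! ### Subject reduction -/

theorem subject_reduction {S : Sig α} {R : Set (Rule α)} (hR : ∀ ρ ∈ R, GoodRule S ρ) :
    ∀ {t t' : Tm α}, Rew R t t' → ∀ σ, HasTy S t σ → HasTy S t' σ := by
  intro t t' h
  induction h with
  | @root ρ γ hρ =>
    intro σ hty
    obtain ⟨hlhs, _, hsub, ⟨σ₀, hl, hrt⟩, _⟩ := hR ρ hρ
    obtain ⟨heq, hγ⟩ := lhs_ty_decomp γ ρ.lhs hlhs σ₀ σ hl hty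
    exact heq ▸ subst_hasty hrt (fun x hx => hγ x (hsub hx))
  | appL h ih =>
    intro σ hty
    cases hty with | app h1 h2 => exact .app (ih _ h1) h2
  | appR h ih =>
    intro σ hty
    cases hty with | app h1 h2 => exact .app h1 (ih _ h2)

/-! ### B-safety preservation -/

theorem step_bsafe {S : Sig α} {R : Set (Rule α)} {B : Set (Tm α)}
    (hR : ∀ ρ ∈ R, GoodRule S ρ)
    (hB1 : ∀ t ∈ B, IsData S t)
    (hB3 : ∀ ρ ∈ R, ∀ v, Subtm v ρ.rhs → IsData S v → v ∈ B) :
    ∀ {t t' : Tm α}, Rew R t t' → (∃ σ, HasTy S t σ) → BSafe S B t → BSafe S B t' := by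
  intro t t' h
  induction h with
  | @root ρ γ hρ =>
    rintro ⟨σ, hty⟩ hsafe u hu hch
    obtain ⟨hlhs, _, hsub, ⟨σ₀, hlty, hrty⟩, hcf⟩ := hR ρ hρ
    rcases subtm_subst_decomp γ ρ.rhs hu with ⟨v, hv, rfl⟩ | ⟨x, hx, hux⟩
    · -- u = subst γ v, v ⊴ rhs
      rcases head_cases γ v with ⟨f, hf, hf'⟩ | ⟨x, hxv, hxvars, hhs⟩
      · -- v has a symbol head
        obtain ⟨c, hc, hcc⟩ := hch
        rw [hf'] at hc
        injection hc with hc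
        subst hc
        have hchv : ConsHead S v := ⟨f, hf, hcc⟩
        rcases hcf v hv hchv with hdata | hstr
        · rw [ground_subst γ v hdata.2]
          exact hB3 ρ hρ v hv hdata
        · exact hsafe _ (.strict (str_subst_mono γ _ _ hstr)) ⟨f, hf', hcc⟩
      · -- head of v is a variable x
        have hxr : x ∈ ρ.rhs.vars := subtm_vars hv hxvars
        have hgx : StrSubtm (γ x) (subst γ ρ.lhs) := lhs_var_pos γ _ hlhs x (hsub hxr)
        obtain ⟨c, hc, hcc⟩ := hch
        rw [hhs] at hc
        have hγxB : γ x ∈ B := hsafe (γ x) (.strict hgx) ⟨c, hc, hcc⟩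
        have hdx := hB1 _ hγxB
        by_cases hve : v = .var x
        · subst hve; exact hγxB
        · exfalso
          have htyr : HasTy S (subst γ ρ.rhs) σ :=
            subject_reduction hR (.root hρ) σ hty
          obtain ⟨τ, hτ⟩ := subtm_hasty htyr (subtm_subst_mono γ hv)
          obtain ⟨a, b, hab⟩ := headvar_arrow γ v x hxv hve τ hτ
          obtain ⟨i, hbase⟩ := isdata_base hdx
          exact Ty.noConfusion (hasty_unique _ _ _ hab hbase)
    · -- u ⊴ γ x, x ∈ rhs.vars
      have hgx : StrSubtm (γ x) (subst γ ρ.lhs) := lhs_var_pos γ _ hlhs x (hsub hx)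
      exact hsafe u (subtm_trans (.strict hgx) hux) hch
  | @appL a a' b h ih =>
    rintro ⟨σ, hty⟩ hsafe
    cases hty with | app h1 h2 =>
    by_cases hch : ConsHead S a
    · obtain ⟨c, hc, hcc⟩ := hch
      have hmem := hsafe _ (.refl _) ⟨c, hc, hcc⟩
      exact (nostep_patspine hR (Rew.appL h (t := b)) (isdata_spine (hB1 _ hmem))
        (hB1 _ hmem).2).elim
    · have hsafea : BSafe S B a := by
        intro u hu hcu
        cases hu with
        | refl => exact absurd hcu hch
        | strict h' => exact hsafe u (.strict (.left h')) hcu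
      have hsa' := ih ⟨_, h1⟩ hsafea
      intro u hu hcu
      cases hu with
      | refl =>
        obtain ⟨c, hc, hcc⟩ := hcu
        have hca' : ConsHead S a' := ⟨c, hc, hcc⟩
        have ha'B := hsa' a' (.refl _) hca'
        obtain ⟨i, hbi⟩ := isdata_base (hB1 _ ha'B)
        have ha'ty := subject_reduction hR h _ h1
        exact Ty.noConfusion (hasty_unique _ _ _ ha'ty hbi)
      | strict h' =>
        cases h' with
        | left hl => exact hsa' u (.strict hl) hcu
        | right hr => exact hsafe u (.strict (.right hr)) hcu
  | @appR a b b' h ih =>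
    rintro ⟨σ, hty⟩ hsafe
    cases hty with | app h1 h2 =>
    have hsafeb : BSafe S B b := fun u hu hcu => hsafe u (.strict (.right hu)) hcu
    have hsb' := ih ⟨_, h2⟩ hsafeb
    intro u hu hcu
    cases hu with
    | refl =>
      obtain ⟨c, hc, hcc⟩ := hcu
      have hmem := hsafe _ (.refl _) ⟨c, hc, hcc⟩
      exact (nostep_patspine hR (Rew.appR h (s := a)) (isdata_spine (hB1 _ hmem))
        (hB1 _ hmem).2).elim
    | strict h' =>
      cases h' with
      | left hl => exact hsafe u (.strict (.left hl)) hcu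
      | right hr => exact hsb' u hr hcu

end Aux

/-- Starting from a basic term `s`, every term reachable by rewriting is
`B_s`-safe, where `B_s` consists of the data terms occurring in `s` or in a
right-hand side of a rule; in particular every data subterm of a reachable term
lies in `B_s`. -/
theorem reachable_bsafe {α : Type} (S : Sig α) (R : Set (Rule α))
    (hR : ∀ ρ ∈ R, GoodRule S ρ)
    (s t : Tm α) (hs : Basic S s) (hst : Relation.ReflTransGen (Rew R) s t) :
    BSafe S (Bset S R s) t ∧
    ∀ u, Subtm u t → IsData S u → u ∈ Bset S R s := by
  obtain ⟨hbs, i, hsty⟩ := hs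
  have hB1 : ∀ u ∈ Bset S R s, IsData S u := fun u hu => hu.1
  have hB3 : ∀ ρ ∈ R, ∀ v, Subtm v ρ.rhs → IsData S v → v ∈ Bset S R s :=
    fun ρ hρ v hv hd => ⟨hd, Or.inr ⟨ρ, hρ, hv⟩⟩
  have hinit : BSafe S (Bset S R s) s := by
    intro u hu hcu
    cases hu with
    | refl =>
      obtain ⟨f, hf, hnc⟩ := basicspine_head s hbs
      obtain ⟨c, hc, hcc⟩ := hcu
      rw [hf] at hc
      injection hc with hc
      exact absurd (hc ▸ hcc) hnc
    | strict h =>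
      exact ⟨basicspine_str_data s hbs u h, Or.inl (.strict h)⟩
  have key : HasTy S t (Ty.base i) ∧ BSafe S (Bset S R s) t := by
    induction hst with
    | refl => exact ⟨hsty, hinit⟩
    | tail h1 h2 ih =>
      exact ⟨subject_reduction hR h2 _ ih.1, step_bsafe hR hB1 hB3 h2 ⟨_, ih.1⟩ ih.2⟩
  exact ⟨key.2, fun u hu hd => key.2 u hu (isdata_conshead hd)⟩
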